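/- Let h be a real number with h ≠ −k/2 for every integer k ≥ 0. Then the q_R-conformal symmetries L_n form a family of tensor operators for 𝔰𝔩(2,ℂ): [l_i, L_n] = (i − n)·L_{i+n} on ℂ[z] for every i ∈ {−1, 0, 1} and every n ∈ ℤ. -/

import Mathlib

open Polynomial

noncomputable section

/-- Operators (ℂ-linear endomorphisms) on ℂ[z], realized as `Polynomial ℂ`. -/
abbrev E : Type := Module.End ℂ (Polynomial ℂ)

/-- The differentiation operator `D(p) = p'`. -/
def Dop : E := Polynomial.derivative

/-- Multiplication by `z`. -/
def Mz : E := LinearMap.mulLeft ℂ (X : Polynomial ℂ)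

/-- `l₋₁(p) = z·p`. -/
def lm1 : E := Mz

/-- `l₀(p) = z·p' + h·p`. -/
def l0 (h : ℝ) : E := Mz * Dop + (h : ℂ) • (1 : E)

/-- `l₁(p) = z·p'' + 2h·p'`. -/
def l1 (h : ℝ) : E := Mz * Dop ^ 2 + ((2 * h : ℝ) : ℂ) • Dop

/-- Commutator `[A,B] = A∘B − B∘A`. -/
def opComm (A B : E) : E := A * B - B * A

/-- The weight `w h n = n!·(2h)(2h+1)⋯(2h+n−1)`, i.e. the squared norm `⟨zⁿ, zⁿ⟩`
in the unitarizable Verma module. -/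
def w (h : ℝ) (n : ℕ) : ℝ := (n.factorial : ℝ) * ∏ i ∈ Finset.range n, (2 * h + (i : ℝ))

lemma end_ext {A B : E} (H : ∀ n : ℕ, A (X ^ n) = B (X ^ n)) : A = B := by
  apply Polynomial.lhom_ext'
  intro n
  apply LinearMap.ext_ring
  simpa [Polynomial.monomial_one_right_eq_X_pow] using H n

lemma Mz_apply (p : Polynomial ℂ) : Mz p = X * p := rfl
lemma Dop_apply (p : Polynomial ℂ) : Dop p = derivative p := rfl

lemma D_Mz : Dop * Mz = Mz * Dop + 1 := by
  apply LinearMap.ext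
  intro p
  simp [Module.End.mul_apply, Mz_apply, Dop_apply]
  ring

lemma Dpow_Mz (k : ℕ) : Dop ^ (k+1) * Mz = Mz * Dop ^ (k+1) + ((k:ℂ)+1) • Dop ^ k := by
  induction k with
  | zero => simpa using D_Mz
  | succ k ih =>
    have h1 : Dop ^ (k+2) * Mz = Dop * (Dop ^ (k+1) * Mz) := by
      rw [pow_succ', mul_assoc]
    rw [h1, ih, mul_add, ← mul_assoc, D_Mz, mul_smul_comm, ← pow_succ', add_mul, one_mul,
      mul_assoc, ← pow_succ']
    push_cast
    module


lemma reassoc {A B C : E} (h : A * Mz = Mz * B + C) (T : E) :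
    A * (Mz * T) = Mz * (B * T) + C * T := by
  rw [← mul_assoc, h, add_mul, mul_assoc]

lemma key2 (P Q R : E) (h m : ℂ)
    (hP : P * Mz = Mz * P + ((m+1) • Q : E))
    (hQ : Q * Mz = Mz * Q + (m • R : E))
    (hDP : Dop * P = P * Dop)
    (hQD : Q * Dop = P)
    (hDQ : Dop * Q = P)
    (hRD : m • (R * Dop) = m • Q) :
    opComm (Mz * Dop + h • (1:E)) (Mz * P + ((m+1)*h) • Q)
      = (-m) • (Mz * P + ((m+1)*h) • Q) := by
  have hDMz : Dop * Mz = Mz * Dop + (1:E) := D_Mz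
  unfold opComm
  simp only [mul_add, add_mul, mul_one, one_mul, smul_mul_assoc, mul_smul_comm, mul_assoc,
    reassoc hDMz, reassoc hP, reassoc hQ, hDP, hQD, hDQ, hRD, smul_add, smul_smul]
  module

lemma key1 (P Q R : E) (h m : ℂ)
    (hP : P * Mz = Mz * P + ((m+1) • Q : E))
    (hQ : Q * Mz = Mz * Q + (m • R : E)) :
    opComm Mz (Mz * P + ((m+1)*h) • Q) = (-1-m) • (Mz * Q + (m*h) • R) := by
  unfold opComm
  simp only [mul_add, add_mul, smul_mul_assoc, mul_smul_comm, mul_assoc, hP, hQ,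
    smul_add, smul_smul]
  module

lemma key3 (P Q R S : E) (h m : ℂ)
    (hP : P * Mz = Mz * P + ((m+1) • Q : E))
    (hQ : Q * Mz = Mz * Q + (m • R : E))
    (hDP : Dop * P = S)
    (hDQ : Dop * Q = P)
    (hDS : Dop * S = S * Dop)
    (hQD : Q * Dop = P)
    (hPD : P * Dop = S)
    (hPDD : P * (Dop * Dop) = S * Dop)
    (hQDD : Q * (Dop * Dop) = S)
    (hRDD : m • (R * (Dop * Dop)) = m • P) :
    opComm (Mz * (Dop * Dop) + (2*h) • Dop) (Mz * P + ((m+1)*h) • Q)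
      = (1-m) • (Mz * S + ((m+1+1)*h) • P) := by
  have hDMz : Dop * Mz = Mz * Dop + (1:E) := D_Mz
  unfold opComm
  simp only [mul_add, add_mul, smul_mul_assoc, mul_smul_comm, mul_assoc,
    reassoc hDMz, reassoc hP, reassoc hQ, hDP, hDQ, hDS, hQD, hPD, hPDD, hQDD, hRDD,
    one_mul, mul_one, smul_add, smul_smul]
  module

lemma Mz_Xpow (n : ℕ) : Mz (X ^ n : Polynomial ℂ) = X ^ (n+1) := by
  rw [Mz_apply, ← pow_succ']

lemma Dop_Xpow (n : ℕ) : Dop (X ^ (n+1) : Polynomial ℂ) = ((n:ℂ)+1) • X ^ n := by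
  rw [Dop_apply, derivative_X_pow, smul_eq_C_mul]
  push_cast
  simp

def l0' (h : ℂ) : E := Mz * Dop + h • (1 : E)
def l1' (h : ℂ) : E := Mz * (Dop * Dop) + (2*h) • Dop

lemma l0'_Xpow (h : ℂ) (n : ℕ) : l0' h (X ^ n) = ((n:ℂ) + h) • X ^ n := by
  cases n with
  | zero => simp [l0', Dop_apply, Mz_apply]
  | succ n =>
    simp only [l0', LinearMap.add_apply, Module.End.mul_apply, LinearMap.smul_apply,
      Module.End.one_apply, Dop_Xpow, map_smul, Mz_Xpow, smul_smul]
    rw [← add_smul]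
    push_cast
    ring_nf

lemma l1'_X0 (h : ℂ) : l1' h ((X : Polynomial ℂ) ^ 0) = 0 := by
  simp [l1', Dop_apply, Mz_apply]

lemma l1'_Xpow (h : ℂ) (n : ℕ) :
    l1' h (X ^ (n+1)) = (((n:ℂ)+1) * ((n:ℂ) + 2*h)) • X ^ n := by
  cases n with
  | zero =>
    simp only [l1', LinearMap.add_apply, Module.End.mul_apply, LinearMap.smul_apply,
      Dop_apply, Mz_apply]
    simp [smul_eq_C_mul]
  | succ n =>
    simp only [l1', LinearMap.add_apply, Module.End.mul_apply, LinearMap.smul_apply,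
      Dop_Xpow, map_smul, Mz_Xpow, smul_smul]
    rw [← add_smul]
    push_cast
    ring_nf

lemma fac_ne (h : ℝ) (hh : ∀ k : ℕ, h ≠ -(k : ℝ) / 2) (n i : ℕ) :
    ((n:ℂ) + 2*(h:ℂ) + (i:ℂ)) ≠ 0 := by
  intro H
  apply hh (n+i)
  have H2 : ((n + 2*h + i : ℝ) : ℂ) = 0 := by push_cast; linear_combination H
  rw [Complex.ofReal_eq_zero] at H2
  push_cast
  linarith

lemma prod_ne (h : ℝ) (hh : ∀ k : ℕ, h ≠ -(k : ℝ) / 2) (n k : ℕ) :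
    (∏ i ∈ Finset.range k, ((n:ℂ) + 2*(h:ℂ) + (i:ℂ))) ≠ 0 :=
  Finset.prod_ne_zero_iff.mpr (fun i _ => fac_ne h hh n i)

lemma prod_shift (h : ℝ) (j k : ℕ) :
    ∏ i ∈ Finset.range (k+1), ((j:ℂ) + 2*(h:ℂ) + (i:ℂ)) =
      (∏ i ∈ Finset.range k, (((j+1:ℕ):ℂ) + 2*(h:ℂ) + (i:ℂ))) * ((j:ℂ) + 2*(h:ℂ)) := by
  rw [Finset.prod_range_succ']
  congr 1
  · exact Finset.prod_congr rfl (fun i _ => by push_cast; ring)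
  · push_cast; ring

lemma scalar1 (h x B B' κ : ℂ) (hB : B ≠ 0) (hB' : B' ≠ 0) (hd : x + 2*h + κ ≠ 0)
    (rel : B' * (x + 2*h) = B * (x + 2*h + κ)) :
    (x + (κ+1)*h)/B - (x + 1 + (κ+1)*h)/B' = (κ-1) * ((x + (κ+2)*h)/(B*(x + 2*h + κ))) := by
  have hx : x + 2*h ≠ 0 := by
    intro e
    exact (mul_ne_zero hB hd) (by rw [← rel, e, mul_zero])
  have hB'' : B' = B * (x + 2*h + κ) / (x + 2*h) := by rw [eq_div_iff hx]; exact rel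
  subst hB''
  have hd2 : x + h * 2 + κ ≠ 0 := by convert hd using 1; ring
  field_simp
  ring

lemma scalar3 (h x B D' κ : ℂ) (hB : B ≠ 0) (hD' : D' ≠ 0) (hd : x + 2*h + (κ-1) ≠ 0)
    (rel : D' = B * (x - 1 + 2*h)) :
    ((x + (κ+1)*h)/(B*(x + 2*h + (κ-1)))) * ((x+κ)*(x+κ-1+2*h))
      - (x*(x-1+2*h)) * ((x - 1 + (κ+1)*h)/D') = (κ+1) * ((x + κ*h)/B) := by
  have hx : x - 1 + 2*h ≠ 0 := by
    intro e
    exact hD' (by rw [rel, e, mul_zero])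
  subst rel
  have hd2 : x + h * 2 + (κ - 1) ≠ 0 := by convert hd using 1; ring
  have hx2 : x - 1 + h * 2 ≠ 0 := by convert hx using 1; ring
  field_simp
  ring

lemma scalar3z (h B κ : ℂ) (hB : B ≠ 0) (hd : 2*h + (κ-1) ≠ 0) :
    (((κ+1)*h)/(B*(2*h+(κ-1)))) * (κ*(κ-1+2*h)) = (κ+1)*((κ*h)/B) := by
  have hd2 : h * 2 + (κ - 1) ≠ 0 := by convert hd using 1; ring
  field_simp
  ring

lemma keyMzl0 (c : ℂ) : opComm Mz (Mz * Dop + c • (1:E)) = (-1 : ℂ) • Mz := by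
  unfold opComm
  simp only [mul_add, add_mul, mul_one, one_mul, smul_mul_assoc, mul_smul_comm, mul_assoc, D_Mz]
  module

lemma keyl1Mz (c : ℂ) :
    opComm (Mz * (Dop * Dop) + (2*c) • Dop) Mz = (2:ℂ) • (Mz * Dop + c • (1:E)) := by
  have hDMz : Dop * Mz = Mz * Dop + (1:E) := D_Mz
  unfold opComm
  simp only [mul_add, add_mul, mul_one, one_mul, smul_mul_assoc, mul_smul_comm, mul_assoc,
    hDMz, reassoc hDMz, smul_add, smul_smul]
  module

lemma hQgen (m : ℕ) : Dop^m * Mz = Mz * Dop^m + ((m:ℂ)) • Dop^(m-1) := by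
  cases m with
  | zero => simp
  | succ m => have := Dpow_Mz m; push_cast at this ⊢; simpa using this

lemma hRDgen (m : ℕ) : ((m:ℂ)) • (Dop^(m-1) * Dop) = (m:ℂ) • Dop^m := by
  cases m with
  | zero => simp
  | succ m => rw [← pow_succ]; simp

lemma hRDDgen (m : ℕ) : ((m:ℂ)) • (Dop^(m-1) * (Dop * Dop)) = (m:ℂ) • Dop^(m+1) := by
  cases m with
  | zero => simp
  | succ m => rw [← mul_assoc, ← pow_succ, ← pow_succ]; simp



/-- For nondegenerate extremal weight `h`, the q_R-conformal symmetries `Lₙ`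
form a family of tensor operators for 𝔰𝔩(2,ℂ): `[lᵢ, Lₙ] = (i − n)·L_{i+n}` for
`i ∈ {−1,0,1}` and all `n ∈ ℤ`. -/
theorem stmt_5 (h : ℝ) (hh : ∀ k : ℕ, h ≠ -(k : ℝ) / 2)
    (L : ℤ → E)
    (hLpos : ∀ k : ℕ, L (k : ℤ) = Mz * Dop ^ (k + 1) + (((k : ℂ) + 1) * (h : ℂ)) • Dop ^ k)
    (hLneg : ∀ k : ℕ, 1 ≤ k → ∀ n : ℕ,
      L (-(k : ℤ)) (X ^ n) =
        (((n : ℂ) + ((k : ℂ) + 1) * (h : ℂ)) /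
            ∏ i ∈ Finset.range k, ((n : ℂ) + 2 * h + (i : ℂ))) • X ^ (n + k))
    :
    ∀ n : ℤ,
      opComm lm1 (L n) = ((-1 - n : ℤ) : ℂ) • L (-1 + n) ∧
      opComm (l0 h) (L n) = ((-n : ℤ) : ℂ) • L n ∧
      opComm (l1 h) (L n) = ((1 - n : ℤ) : ℂ) • L (1 + n) := by
  have hfac := fac_ne h hh
  have hpne := prod_ne h hh
  have hl0 : l0 h = l0' (h:ℂ) := rfl
  have hl1 : l1 h = l1' (h:ℂ) := by
    rw [l1, l1', pow_two]
    norm_cast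
  have hLm1 : L (-1) = Mz := by
    apply end_ext
    intro n
    rw [show (-1 : ℤ) = -((1:ℕ):ℤ) by norm_num, hLneg 1 le_rfl n, Mz_Xpow,
      Finset.prod_range_one]
    have hne := hfac n 0
    push_cast at hne ⊢
    rw [show (n:ℂ) + (1+1)*(h:ℂ) = (n:ℂ) + 2*(h:ℂ) + 0 by ring, div_self hne, one_smul]
  intro n
  rcases n with m | k
  · simp only [Int.ofNat_eq_natCast]
    refine ⟨?_, ?_, ?_⟩
    · cases m with
      | zero =>
        rw [show (-1 + ((0:ℕ):ℤ)) = -1 by norm_num, hLpos 0, hLm1]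
        simp only [Nat.zero_add, pow_one, pow_zero]
        rw [show lm1 = Mz from rfl, keyMzl0]
        norm_num
      | succ m =>
        rw [show (-1 + ((m+1:ℕ):ℤ)) = ((m:ℕ):ℤ) by push_cast; ring,
          hLpos (m+1), hLpos m]
        have hP := Dpow_Mz (m+1)
        push_cast at hP
        push_cast
        exact key1 _ _ _ _ _ hP (Dpow_Mz m)
    · rw [hLpos m, hl0]
      have hDP : Dop * Dop^(m+1) = Dop^(m+1) * Dop := by rw [← pow_succ, ← pow_succ']
      have hQD : Dop^m * Dop = Dop^(m+1) := (pow_succ Dop m).symm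
      have hDQ : Dop * Dop^m = Dop^(m+1) := (pow_succ' Dop m).symm
      push_cast
      exact key2 _ _ _ _ _ (Dpow_Mz m) (hQgen m) hDP hQD hDQ (hRDgen m)
    · rw [show (1 + ((m:ℕ):ℤ)) = (((m+1:ℕ)):ℤ) by push_cast; ring,
        hLpos m, hLpos (m+1), hl1]
      have hDP : Dop * Dop^(m+1) = Dop^(m+1+1) := (pow_succ' _ _).symm
      have hDQ : Dop * Dop^m = Dop^(m+1) := (pow_succ' _ _).symm
      have hDS : Dop * Dop^(m+1+1) = Dop^(m+1+1) * Dop := by rw [← pow_succ, ← pow_succ']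
      have hQD : Dop^m * Dop = Dop^(m+1) := (pow_succ _ _).symm
      have hPD : Dop^(m+1) * Dop = Dop^(m+1+1) := (pow_succ _ _).symm
      have hPDD : Dop^(m+1) * (Dop * Dop) = Dop^(m+1+1) * Dop := by
        rw [← mul_assoc, hPD]
      have hQDD : Dop^m * (Dop * Dop) = Dop^(m+1+1) := by rw [← mul_assoc, hQD, hPD]
      push_cast
      exact key3 _ _ _ _ _ _ (Dpow_Mz m) (hQgen m) hDP hDQ hDS hQD hPD hPDD hQDD (hRDDgen m)
  · have e1 : (Int.negSucc k) = -(((k+1:ℕ)):ℤ) := by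
      rw [Int.negSucc_eq]; push_cast; ring
    rw [e1]
    refine ⟨?_, ?_, ?_⟩
    · rw [show (-1 + -((k+1:ℕ):ℤ)) = -(((k+1)+1:ℕ):ℤ) by push_cast; ring]
      apply end_ext
      intro j
      simp only [opComm, LinearMap.sub_apply, Module.End.mul_apply, LinearMap.smul_apply,
        show lm1 = Mz from rfl]
      rw [Mz_Xpow j, hLneg (k+1) (by omega) j, hLneg (k+1) (by omega) (j+1),
        hLneg (k+1+1) (by omega) j, map_smul, Mz_Xpow]
      rw [show (j+1)+(k+1) = j+(k+1)+1 from by omega,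
        show j+(k+1+1) = j+(k+1)+1 from by omega]
      simp only [smul_smul]
      rw [← sub_smul]
      congr 1
      have hB := hpne j (k+1)
      have hB' := hpne (j+1) (k+1)
      have hd : ((j:ℂ) + 2*(h:ℂ) + ((k:ℂ)+1)) ≠ 0 := by
        intro e
        apply hfac j (k+1)
        push_cast
        linear_combination e
      have rel : (∏ i ∈ Finset.range (k+1), (((j+1:ℕ):ℂ) + 2*(h:ℂ) + (i:ℂ))) * ((j:ℂ) + 2*(h:ℂ))
          = (∏ i ∈ Finset.range (k+1), ((j:ℂ) + 2*(h:ℂ) + (i:ℂ))) * ((j:ℂ) + 2*(h:ℂ) + ((k:ℂ)+1)) := by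
        rw [← prod_shift h j (k+1), Finset.prod_range_succ]
        push_cast
        ring
      have S := scalar1 (h:ℂ) (j:ℂ) _ _ ((k:ℂ)+1) hB hB' hd rel
      have e2 : (∏ i ∈ Finset.range (k+1+1), ((j:ℂ) + 2*(h:ℂ) + (i:ℂ)))
          = (∏ i ∈ Finset.range (k+1), ((j:ℂ) + 2*(h:ℂ) + (i:ℂ))) * ((j:ℂ) + 2*(h:ℂ) + ((k+1:ℕ):ℂ)) :=
        Finset.prod_range_succ _ _
      rw [e2]
      push_cast at S ⊢
      linear_combination S
    · apply end_ext
      intro j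
      simp only [opComm, LinearMap.sub_apply, Module.End.mul_apply, LinearMap.smul_apply, hl0]
      rw [hLneg (k+1) (by omega) j, map_smul, l0'_Xpow, l0'_Xpow, map_smul,
        hLneg (k+1) (by omega) j]
      simp only [smul_smul]
      rw [← sub_smul]
      congr 1
      push_cast
      ring
    · cases k with
      | zero =>
        rw [show (-((0+1:ℕ):ℤ)) = -1 by norm_num,
          show ((1:ℤ) + -1) = ((0:ℕ):ℤ) by norm_num, hLm1, hLpos 0, hl1]
        simp only [Nat.zero_add, pow_one, pow_zero]
        rw [show l1' (h:ℂ) = Mz * (Dop * Dop) + (2*(h:ℂ)) • Dop from rfl, keyl1Mz]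
        norm_num
      | succ k' =>
        rw [show ((1:ℤ) + -((k'+1+1:ℕ):ℤ)) = -((k'+1:ℕ):ℤ) by push_cast; ring]
        apply end_ext
        intro j
        simp only [opComm, LinearMap.sub_apply, Module.End.mul_apply, LinearMap.smul_apply, hl1]
        rw [hLneg (k'+1+1) (by omega) j, map_smul]
        cases j with
        | zero =>
          rw [show 0 + (k'+1+1) = (0+(k'+1)) + 1 from by omega, l1'_Xpow, l1'_X0, map_zero,
            sub_zero, hLneg (k'+1) (by omega) 0]
          simp only [smul_smul]
          congr 1
          have hB := hpne 0 (k'+1)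
          have hd : (2*(h:ℂ) + (((k':ℂ)+1+1)-1)) ≠ 0 := by
            intro e
            apply hfac 0 (k'+1)
            push_cast
            linear_combination e
          have e2 : (∏ i ∈ Finset.range (k'+1+1), (((0:ℕ):ℂ) + 2*(h:ℂ) + (i:ℂ)))
              = (∏ i ∈ Finset.range (k'+1), (((0:ℕ):ℂ) + 2*(h:ℂ) + (i:ℂ))) * (((0:ℕ):ℂ) + 2*(h:ℂ) + ((k'+1:ℕ):ℂ)) :=
            Finset.prod_range_succ _ _
          rw [e2]
          have S := scalar3z (h:ℂ) _ ((k':ℂ)+1+1) hB hd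
          push_cast at S ⊢
          linear_combination S
        | succ j' =>
          rw [show (j'+1) + (k'+1+1) = ((j'+1)+(k'+1)) + 1 from by omega, l1'_Xpow,
            l1'_Xpow, map_smul, hLneg (k'+1+1) (by omega) j',
            show j' + (k'+1+1) = (j'+1)+(k'+1) from by omega,
            hLneg (k'+1) (by omega) (j'+1)]
          simp only [smul_smul]
          rw [← sub_smul]
          congr 1
          have hB := hpne (j'+1) (k'+1)
          have hD' := hpne j' (k'+1+1)
          have hd : (((j':ℂ)+1) + 2*(h:ℂ) + (((k':ℂ)+1+1)-1)) ≠ 0 := by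
            intro e
            apply hfac (j'+1) (k'+1)
            push_cast
            linear_combination e
          have rel : (∏ i ∈ Finset.range (k'+1+1), ((j':ℂ) + 2*(h:ℂ) + (i:ℂ)))
              = (∏ i ∈ Finset.range (k'+1), (((j'+1:ℕ):ℂ) + 2*(h:ℂ) + (i:ℂ))) * (((j':ℂ)+1) - 1 + 2*(h:ℂ)) := by
            rw [prod_shift h j' (k'+1)]
            ring
          have S := scalar3 (h:ℂ) ((j':ℂ)+1) _ _ ((k':ℂ)+1+1) hB hD' hd rel
          have e2 : (∏ i ∈ Finset.range (k'+1+1), (((j'+1:ℕ):ℂ) + 2*(h:ℂ) + (i:ℂ)))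
              = (∏ i ∈ Finset.range (k'+1), (((j'+1:ℕ):ℂ) + 2*(h:ℂ) + (i:ℂ))) * (((j'+1:ℕ):ℂ) + 2*(h:ℂ) + ((k'+1:ℕ):ℂ)) :=
            Finset.prod_range_succ _ _
          rw [e2]
          push_cast at S ⊢
          linear_combination S

end
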